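/- Assume (H2). Then for every α > 0, the infimum over all x ∈ ℝ^d with ‖x‖ ≤ 1/α and all unit vectors u,v ∈ ℝ^d of ∫_{ℝ^d} |h·u|² |h·v| p(x,h) dh is strictly positive. -/

import Mathlib

open MeasureTheory Real Set
open scoped RealInnerProductSpace ENNReal NNReal

noncomputable section

abbrev Euc (d : ℕ) := EuclideanSpace ℝ (Fin d)

variable {d : ℕ}

/-- gradient of `g` with respect to its first variable -/
def grad1 (g : Euc d → Euc d → ℝ) (y x : Euc d) : Euc d :=
  gradient (fun z => g z x) y

/-- Hessian of `g` with respect to its first variable, as a continuous bilinear map -/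
def hess11 (g : Euc d → Euc d → ℝ) (y x : Euc d) : Euc d →L[ℝ] Euc d →L[ℝ] ℝ :=
  fderiv ℝ (fderiv ℝ (fun z => g z x)) y

/-- set of evolutionary singularities -/
def Gam (g : Euc d → Euc d → ℝ) : Set (Euc d) := {x | grad1 g x x = 0}

def GamAlpha (g : Euc d → Euc d → ℝ) (α : ℝ) : Set (Euc d) :=
  {x | α ≤ Metric.infDist x (Gam g) ∧ ‖x‖ ≤ 1 / α}

/-- `p` is a measurable symmetric probability-density kernel -/
def IsMutKernel (p : Euc d → Euc d → ℝ) : Prop :=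
  Measurable (Function.uncurry p) ∧
  (∀ x h, 0 ≤ p x h) ∧
  (∀ x, Integrable (fun h => p x h)) ∧
  (∀ x, (∫ h, p x h) = 1) ∧
  (∀ x h, p x (-h) = p x h)

/-- Assumption (H2) -/
def H2 (p : Euc d → Euc d → ℝ) : Prop :=
  (∀ x, Integrable (fun h : Euc d => ‖h‖ ^ 3 * p x h)) ∧
  (∃ M : ℝ, ∀ x, (∫ h : Euc d, ‖h‖ ^ 3 * p x h) ≤ M) ∧
  ∃ m : ℝ → ℝ, Measurable m ∧ (∀ r, 0 ≤ m r) ∧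
    Integrable (fun h : Euc d => (‖h‖ ^ 2 ⊔ ‖h‖ ^ 3) * m ‖h‖) ∧
    (∀ x y h, |p x h - p y h| ≤ ‖x - y‖ * m ‖h‖) ∧
    (∀ x h, p x h ≤ m ‖h‖)

/-- Assumption (H1) -/
def H1 (g : Euc d → Euc d → ℝ) : Prop :=
  (∀ x : Euc d, ContDiff ℝ 2 (fun z => g z x)) ∧
  (∃ C : ℝ, ∀ y x : Euc d, ‖grad1 g y x‖ ≤ C) ∧
  (∃ K : ℝ≥0, LipschitzWith K (fun q : Euc d × Euc d => grad1 g q.1 q.2)) ∧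
  (∃ C : ℝ, ∀ y x : Euc d, ‖hess11 g y x‖ ≤ C) ∧
  (∃ K : ℝ≥0, LipschitzWith K (fun q : Euc d × Euc d => hess11 g q.1 q.2))

/-- drift coefficient b -/
def bCoeff (g p : Euc d → Euc d → ℝ) (x : Euc d) : Euc d :=
  (WithLp.equiv 2 (Fin d → ℝ)).symm fun k =>
    ∫ h : Euc d, h k * max (⟪grad1 g x x, h⟫) 0 * p x h

/-- diffusion matrix a -/
def aMat (g p : Euc d → Euc d → ℝ) (x : Euc d) : Matrix (Fin d) (Fin d) ℝ :=
  Matrix.of fun k l => ∫ h : Euc d, h k * h l * max (⟪h, grad1 g x x⟫) 0 * p x h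

/-- second-order drift coefficient b-tilde -/
def btCoeff (g p : Euc d → Euc d → ℝ) (x : Euc d) : Euc d :=
  (WithLp.equiv 2 (Fin d → ℝ)).symm fun k =>
    (1 / 2) * ∫ h in {h : Euc d | 0 < ⟪h, grad1 g x x⟫},
      h k * hess11 g x x h h * p x h

/-- quadratic form sᵀ a(x) s -/
def quadA (g p : Euc d → Euc d → ℝ) (x s : Euc d) : ℝ :=
  ∑ k, ∑ l, s k * aMat g p x k l * s l

/-- quadratic form sᵀ a(x)⁻¹ s -/
def quadAInv (g p : Euc d → Euc d → ℝ) (x s : Euc d) : ℝ :=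
  ∑ k, ∑ l, s k * (aMat g p x)⁻¹ k l * s l

/-- full Hessian of `g` (as a function on the product space) at `(y,x)` -/
def hessF (g : Euc d → Euc d → ℝ) (y x : Euc d) :
    (Euc d × Euc d) →L[ℝ] (Euc d × Euc d) →L[ℝ] ℝ :=
  fderiv ℝ (fderiv ℝ (fun q : Euc d × Euc d => g q.1 q.2)) (y, x)

/-- action of a matrix on a vector of `Euc d` -/
def mulVecE (M : Matrix (Fin d) (Fin d) ℝ) (v : Euc d) : Euc d :=
  (WithLp.equiv 2 (Fin d → ℝ)).symm (M.mulVec (WithLp.equiv 2 (Fin d → ℝ) v))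


section Aux

variable {d : ℕ}

private lemma hyperplane_null (u : Euc d) (hu : u ≠ 0) :
    volume {h : Euc d | ⟪h, u⟫ = 0} = 0 := by
  have hset : {h : Euc d | ⟪h, u⟫ = 0}
      = (LinearMap.ker ((innerSL ℝ u : Euc d →L[ℝ] ℝ) : Euc d →ₗ[ℝ] ℝ) : Set (Euc d)) := by
    ext h
    simp only [SetLike.mem_coe, LinearMap.mem_ker, ContinuousLinearMap.coe_coe, innerSL_apply_apply,
      mem_setOf_eq, real_inner_comm]
  rw [hset]
  refine Measure.addHaar_submodule _ _ ?_
  intro htop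
  have hm : u ∈ LinearMap.ker ((innerSL ℝ u : Euc d →L[ℝ] ℝ) : Euc d →ₗ[ℝ] ℝ) := htop ▸ Submodule.mem_top
  simp only [LinearMap.mem_ker, ContinuousLinearMap.coe_coe, innerSL_apply_apply] at hm
  exact hu (inner_self_eq_zero.mp hm)

private lemma integrand_meas {p : Euc d → Euc d → ℝ} (hp : Measurable (Function.uncurry p))
    (x u v : Euc d) :
    Measurable (fun h : Euc d => |⟪h, u⟫| ^ 2 * |⟪h, v⟫| * p x h) := by
  have hpx : Measurable (fun h : Euc d => p x h) :=
    hp.comp (measurable_const.prodMk measurable_id)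
  have h1 : Continuous (fun h : Euc d => |⟪h, u⟫| ^ 2 * |⟪h, v⟫|) :=
    (((continuous_id.inner continuous_const).abs.pow 2).mul
      (continuous_id.inner continuous_const).abs)
  exact h1.measurable.mul hpx

private lemma integrand_integrable {p : Euc d → Euc d → ℝ} (hker : IsMutKernel p)
    (hH2 : H2 p) (x u v : Euc d) :
    Integrable (fun h : Euc d => |⟪h, u⟫| ^ 2 * |⟪h, v⟫| * p x h) := by
  have hInt : Integrable (fun h : Euc d => (‖u‖ ^ 2 * ‖v‖) * (‖h‖ ^ 3 * p x h)) :=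
    (hH2.1 x).const_mul _
  refine hInt.mono ((integrand_meas hker.1 x u v).aestronglyMeasurable) ?_
  refine Filter.Eventually.of_forall fun h => ?_
  have hp0 := hker.2.1 x h
  have hu1 : |⟪h, u⟫| ≤ ‖h‖ * ‖u‖ := abs_real_inner_le_norm h u
  have hv1 : |⟪h, v⟫| ≤ ‖h‖ * ‖v‖ := abs_real_inner_le_norm h v
  have habs : |⟪h, u⟫| ^ 2 * |⟪h, v⟫| * p x h ≤ (‖h‖ * ‖u‖) ^ 2 * (‖h‖ * ‖v‖) * p x h := by
    have h2 : |⟪h, u⟫| ^ 2 ≤ (‖h‖ * ‖u‖) ^ 2 :=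
      pow_le_pow_left₀ (abs_nonneg _) hu1 2
    have hmm := mul_le_mul h2 hv1 (abs_nonneg _) (by positivity)
    exact mul_le_mul_of_nonneg_right hmm hp0
  have hnn : 0 ≤ |⟪h, u⟫| ^ 2 * |⟪h, v⟫| * p x h := by positivity
  rw [Real.norm_of_nonneg hnn, Real.norm_of_nonneg (by positivity)]
  calc |⟪h, u⟫| ^ 2 * |⟪h, v⟫| * p x h ≤ (‖h‖ * ‖u‖) ^ 2 * (‖h‖ * ‖v‖) * p x h := habs
    _ = ‖u‖ ^ 2 * ‖v‖ * (‖h‖ ^ 3 * p x h) := by ring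

private lemma integrand_pos {p : Euc d → Euc d → ℝ} (hker : IsMutKernel p)
    (hH2 : H2 p) (x u v : Euc d) (hu : u ≠ 0) (hv : v ≠ 0) :
    0 < ∫ h : Euc d, |⟪h, u⟫| ^ 2 * |⟪h, v⟫| * p x h := by
  set f : Euc d → ℝ := fun h => |⟪h, u⟫| ^ 2 * |⟪h, v⟫| * p x h with hf
  have hfnn : ∀ h, 0 ≤ f h := fun h => by
    have := hker.2.1 x h; positivity
  have hfi : Integrable f := integrand_integrable hker hH2 x u v
  rcases lt_or_eq_of_le (integral_nonneg (f := f) hfnn) with hlt | heq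
  · exact hlt
  · exfalso
    have hf0 : f =ᵐ[volume] 0 :=
      (integral_eq_zero_iff_of_nonneg hfnn hfi).mp heq.symm
    have hNu : ∀ᵐ h : Euc d, ⟪h, u⟫ ≠ 0 :=
      (ae_iff.mpr (by simpa using hyperplane_null u hu))
    have hNv : ∀ᵐ h : Euc d, ⟪h, v⟫ ≠ 0 :=
      (ae_iff.mpr (by simpa using hyperplane_null v hv))
    have hp0 : (fun h => p x h) =ᵐ[volume] 0 := by
      filter_upwards [hf0, hNu, hNv] with h h0 hu0 hv0
      have h0' : |⟪h, u⟫| ^ 2 * |⟪h, v⟫| * p x h = 0 := h0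
      have hA : |⟪h, u⟫| ^ 2 * |⟪h, v⟫| ≠ 0 := by
        have hgt : (0:ℝ) < |⟪h, u⟫| ^ 2 * |⟪h, v⟫| := by
          have h1 := abs_pos.mpr hu0
          have h2 := abs_pos.mpr hv0
          positivity
        exact ne_of_gt hgt
      simpa using (mul_eq_zero.mp h0').resolve_left hA
    have hzero : (∫ h : Euc d, p x h) = 0 := by
      rw [integral_congr_ae hp0]; simp
    rw [hker.2.2.2.1 x] at hzero
    norm_num at hzero

private lemma integrand_cont {p : Euc d → Euc d → ℝ} (hker : IsMutKernel p)
    (hH2 : H2 p) :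
    Continuous (fun q : Euc d × Euc d × Euc d =>
      ∫ h : Euc d, |⟪h, q.2.1⟫| ^ 2 * |⟪h, q.2.2⟫| * p q.1 h) := by
  obtain ⟨m, hm_meas, hm_nn, hm_int, hm_lip, hm_bd⟩ := hH2.2.2
  rw [continuous_iff_continuousAt]
  intro q₀
  have h3m : Integrable (fun h : Euc d => ‖h‖ ^ 3 * m ‖h‖) := by
    refine hm_int.mono ?_ ?_
    · exact ((measurable_norm.pow_const 3).mul (hm_meas.comp measurable_norm)).aestronglyMeasurable
    · refine Filter.Eventually.of_forall fun h => ?_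
      have h1 : (0:ℝ) ≤ m ‖h‖ := hm_nn _
      rw [Real.norm_of_nonneg (by positivity), Real.norm_of_nonneg
        (mul_nonneg (le_trans (by positivity) (le_max_right (‖h‖^2) (‖h‖^3))) h1)]
      exact mul_le_mul_of_nonneg_right (le_max_right _ _) h1
  set B : ℝ := (‖q₀.2.1‖ + 1) ^ 2 * (‖q₀.2.2‖ + 1) with hB
  refine continuousAt_of_dominated ?_ ?_ (h3m.const_mul B) ?_
  · exact Filter.Eventually.of_forall fun q =>
      (integrand_meas hker.1 q.1 q.2.1 q.2.2).aestronglyMeasurable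
  · have h1 : ∀ᶠ q : Euc d × Euc d × Euc d in nhds q₀, ‖q.2.1‖ < ‖q₀.2.1‖ + 1 := by
      have hc : Continuous fun q : Euc d × Euc d × Euc d => ‖q.2.1‖ :=
        continuous_norm.comp (continuous_fst.comp continuous_snd)
      exact hc.continuousAt.eventually_lt continuousAt_const (by linarith)
    have h2 : ∀ᶠ q : Euc d × Euc d × Euc d in nhds q₀, ‖q.2.2‖ < ‖q₀.2.2‖ + 1 := by
      have hc : Continuous fun q : Euc d × Euc d × Euc d => ‖q.2.2‖ :=
        continuous_norm.comp (continuous_snd.comp continuous_snd)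
      exact hc.continuousAt.eventually_lt continuousAt_const (by linarith)
    filter_upwards [h1, h2] with q hq1 hq2
    refine Filter.Eventually.of_forall fun h => ?_
    have hp0 := hker.2.1 q.1 h
    have hpb := hm_bd q.1 h
    have hm0 : (0:ℝ) ≤ m ‖h‖ := hm_nn _
    have hu1 : |⟪h, q.2.1⟫| ≤ ‖h‖ * (‖q₀.2.1‖ + 1) := by
      calc |⟪h, q.2.1⟫| ≤ ‖h‖ * ‖q.2.1‖ := abs_real_inner_le_norm _ _
        _ ≤ ‖h‖ * (‖q₀.2.1‖ + 1) :=
            mul_le_mul_of_nonneg_left (le_of_lt hq1) (norm_nonneg _)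
    have hv1 : |⟪h, q.2.2⟫| ≤ ‖h‖ * (‖q₀.2.2‖ + 1) := by
      calc |⟪h, q.2.2⟫| ≤ ‖h‖ * ‖q.2.2‖ := abs_real_inner_le_norm _ _
        _ ≤ ‖h‖ * (‖q₀.2.2‖ + 1) :=
            mul_le_mul_of_nonneg_left (le_of_lt hq2) (norm_nonneg _)
    rw [Real.norm_of_nonneg (by positivity)]
    have hsq : |⟪h, q.2.1⟫| ^ 2 ≤ (‖h‖ * (‖q₀.2.1‖ + 1)) ^ 2 :=
      pow_le_pow_left₀ (abs_nonneg _) hu1 2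
    have hstep : |⟪h, q.2.1⟫| ^ 2 * |⟪h, q.2.2⟫| ≤
        (‖h‖ * (‖q₀.2.1‖ + 1)) ^ 2 * (‖h‖ * (‖q₀.2.2‖ + 1)) :=
      mul_le_mul hsq hv1 (abs_nonneg _) (by positivity)
    calc |⟪h, q.2.1⟫| ^ 2 * |⟪h, q.2.2⟫| * p q.1 h
        ≤ (‖h‖ * (‖q₀.2.1‖ + 1)) ^ 2 * (‖h‖ * (‖q₀.2.2‖ + 1)) * m ‖h‖ :=
          mul_le_mul hstep hpb hp0 (by positivity)
      _ = B * (‖h‖ ^ 3 * m ‖h‖) := by rw [hB]; ring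
  · refine Filter.Eventually.of_forall fun h => ?_
    have hcp : Continuous (fun x : Euc d => p x h) := by
      have hl : LipschitzWith ⟨m ‖h‖, hm_nn _⟩ (fun x : Euc d => p x h) := by
        refine LipschitzWith.of_dist_le_mul fun x y => ?_
        rw [Real.dist_eq, dist_eq_norm]
        calc |p x h - p y h| ≤ ‖x - y‖ * m ‖h‖ := hm_lip x y h
          _ = (⟨m ‖h‖, hm_nn _⟩ : ℝ≥0) * ‖x - y‖ := by
              simp [mul_comm]
      exact hl.continuous
    have hc : Continuous (fun q : Euc d × Euc d × Euc d =>
        |⟪h, q.2.1⟫| ^ 2 * |⟪h, q.2.2⟫| * p q.1 h) := by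
      refine Continuous.mul ?_ (hcp.comp continuous_fst)
      exact ((continuous_const.inner (continuous_fst.comp continuous_snd)).abs.pow 2).mul
        (continuous_const.inner (continuous_snd.comp continuous_snd)).abs
    exact hc.continuousAt

end Aux

set_option maxHeartbeats 1000000 in
theorem stmt1 {d : ℕ} (hd : 1 ≤ d) (p : Euc d → Euc d → ℝ)
    (hker : IsMutKernel p) (hH2 : H2 p) :
    ∀ α : ℝ, 0 < α → ∃ c : ℝ, 0 < c ∧ ∀ x u v : Euc d,
      ‖x‖ ≤ 1 / α → ‖u‖ = 1 → ‖v‖ = 1 →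
      c ≤ ∫ h : Euc d, |⟪h, u⟫| ^ 2 * |⟪h, v⟫| * p x h := by
  intro α hα
  classical
  set K : Set (Euc d × Euc d × Euc d) :=
    Metric.closedBall (0 : Euc d) (1 / α) ×ˢ
      (Metric.sphere (0 : Euc d) 1 ×ˢ Metric.sphere (0 : Euc d) 1) with hK
  have hKc : IsCompact K :=
    (isCompact_closedBall _ _).prod ((isCompact_sphere _ _).prod (isCompact_sphere _ _))
  have hα' : (0:ℝ) ≤ 1 / α := by positivity
  have hsph : (Metric.sphere (0 : Euc d) 1).Nonempty := by
    refine ⟨EuclideanSpace.single (⟨0, hd⟩ : Fin d) (1:ℝ), ?_⟩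
    rw [mem_sphere_zero_iff_norm, EuclideanSpace.norm_single]
    norm_num
  obtain ⟨u₀, hu₀⟩ := hsph
  have hKne : K.Nonempty :=
    ⟨(0, u₀, u₀), ⟨Metric.mem_closedBall_self hα', hu₀, hu₀⟩⟩
  set F : Euc d × Euc d × Euc d → ℝ := fun q =>
    ∫ h : Euc d, |⟪h, q.2.1⟫| ^ 2 * |⟪h, q.2.2⟫| * p q.1 h with hF
  have hFc : Continuous F := integrand_cont hker hH2
  obtain ⟨q₀, hq₀K, hq₀min⟩ := hKc.exists_isMinOn hKne hFc.continuousOn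
  refine ⟨F q₀, ?_, ?_⟩
  · have hu0 : q₀.2.1 ≠ 0 := by
      have hn : ‖q₀.2.1‖ = 1 := mem_sphere_zero_iff_norm.mp hq₀K.2.1
      intro h0; rw [h0] at hn; simp at hn
    have hv0 : q₀.2.2 ≠ 0 := by
      have hn : ‖q₀.2.2‖ = 1 := mem_sphere_zero_iff_norm.mp hq₀K.2.2
      intro h0; rw [h0] at hn; simp at hn
    exact integrand_pos hker hH2 q₀.1 q₀.2.1 q₀.2.2 hu0 hv0
  · intro x u v hx hu hv
    have hmem : (x, u, v) ∈ K := by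
      refine ⟨?_, ?_, ?_⟩
      · simpa [Metric.mem_closedBall] using hx
      · exact mem_sphere_zero_iff_norm.mpr hu
      · exact mem_sphere_zero_iff_norm.mpr hv
    have hle : F q₀ ≤ F (x, u, v) := hq₀min hmem
    exact hle
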